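/- Let H be a complex Hilbert space and T a densely defined self-adjoint unbounded operator on H. For a bounded operator x on H define L(x) := sup { |⟨ξ, x*(Tη)⟩ − ⟨x(Tξ), η⟩| : ξ, η ∈ Dom(T), ‖ξ‖ = ‖η‖ = 1 } ∈ [0, ∞]. Then: (1) L is lower semicontinuous on the bounded operators with respect to the operator norm; (2) L is *-invariant: L(x*) = L(x) for every bounded operator x; (3) L satisfies the Leibniz inequality L(xy) ≤ L(x)·‖y‖ + ‖x‖·L(y) for all bounded operators x, y (with the convention that the right-hand side is ∞ whenever L(x) = ∞ or L(y) = ∞); in particular, on the set of x with L(x) < ∞, L is a seminorm. -/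

import Mathlib

open scoped ENNReal

/-- The seminorm `L(x) = sup { |⟨ξ, x*(Tη)⟩ − ⟨x(Tξ), η⟩| : ξ, η ∈ Dom(T), ‖ξ‖ = ‖η‖ = 1 }`,
valued in `[0,∞]`. -/
noncomputable def Lsem {H : Type*} [NormedAddCommGroup H] [InnerProductSpace ℂ H]
    [CompleteSpace H] (T : H →ₗ.[ℂ] H) (x : H →L[ℂ] H) : ℝ≥0∞ :=
  ⨆ (ξ : T.domain) (_ : ‖(ξ : H)‖ = 1) (η : T.domain) (_ : ‖(η : H)‖ = 1),
    (‖(inner (𝕜 := ℂ) (ξ : H) ((star x) (T η)) : ℂ) -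
      (inner (𝕜 := ℂ) (x (T ξ)) (η : H) : ℂ)‖₊ : ℝ≥0∞)

open Complex Filter Topology
open scoped ComplexConjugate

section aux
variable {H : Type*} [NormedAddCommGroup H] [InnerProductSpace ℂ H] [CompleteSpace H]

local notation "⟪" a ", " b "⟫" => inner (𝕜 := ℂ) a b

/-- the commutator sesquilinear form -/
noncomputable def Bform (T : H →ₗ.[ℂ] H) (x : H →L[ℂ] H) (ξ η : T.domain) : ℂ :=
  ⟪(ξ : H), (star x) (T η)⟫ - ⟪x (T ξ), (η : H)⟫

variable {T : H →ₗ.[ℂ] H}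

theorem symm_of_sa (hdense : Dense (T.domain : Set H)) (hsa : IsSelfAdjoint T)
    (u v : T.domain) : ⟪(T u : H), (v : H)⟫ = ⟪(u : H), (T v : H)⟫ := by
  have h := LinearPMap.isSelfAdjoint_def.mp hsa
  have h2 := LinearPMap.adjoint_isFormalAdjoint hdense (T := T)
  rw [h] at h2
  exact h2 u v

theorem maximal_of_sa (hdense : Dense (T.domain : Set H)) (hsa : IsSelfAdjoint T)
    (v w : H) (h : ∀ u : T.domain, ⟪w, (u : H)⟫ = ⟪v, (T u : H)⟫) :
    ∃ hv : v ∈ T.domain, T ⟨v, hv⟩ = w := by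
  have hsa' := LinearPMap.isSelfAdjoint_def.mp hsa
  rw [← hsa']
  have hv : v ∈ (LinearPMap.adjoint T).domain :=
    LinearPMap.mem_adjoint_domain_of_exists v ⟨w, h⟩
  exact ⟨hv, LinearPMap.adjoint_apply_eq hdense ⟨v, hv⟩ h⟩

theorem closed_of_sa (hdense : Dense (T.domain : Set H)) (hsa : IsSelfAdjoint T)
    (f : ℕ → T.domain) (u w : H) (hu : Tendsto (fun n => (f n : H)) atTop (𝓝 u))
    (hw : Tendsto (fun n => (T (f n) : H)) atTop (𝓝 w)) :
    ∃ hv : u ∈ T.domain, T ⟨u, hv⟩ = w := by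
  apply maximal_of_sa hdense hsa
  intro v
  have h1 : Tendsto (fun n => ⟪(T (f n) : H), (v : H)⟫) atTop (𝓝 ⟪w, (v:H)⟫) :=
    hw.inner tendsto_const_nhds
  have h2 : Tendsto (fun n => ⟪(f n : H), (T v : H)⟫) atTop (𝓝 ⟪u, (T v : H)⟫) :=
    hu.inner tendsto_const_nhds
  have : (fun n => ⟪(T (f n) : H), (v : H)⟫) = fun n => ⟪(f n : H), (T v : H)⟫ := by
    funext n; exact symm_of_sa hdense hsa (f n) v
  rw [this] at h1
  exact tendsto_nhds_unique h1 h2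

theorem inner_T_im (hdense : Dense (T.domain : Set H)) (hsa : IsSelfAdjoint T)
    (u : T.domain) : (⟪(T u : H), (u : H)⟫).im = 0 := by
  have h1 : (starRingEnd ℂ) ⟪(T u : H), (u : H)⟫ = ⟪(T u : H), (u : H)⟫ := by
    rw [inner_conj_symm]
    exact (symm_of_sa hdense hsa u u).symm
  exact Complex.conj_eq_iff_im.mp h1

theorem normsq_of_sa (hdense : Dense (T.domain : Set H)) (hsa : IsSelfAdjoint T)
    (t : ℝ) (u : T.domain) :
    ‖(T u : H) + (Complex.I * t) • (u : H)‖ ^ 2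
      = ‖(T u : H)‖ ^ 2 + t ^ 2 * ‖(u : H)‖ ^ 2 := by
  have him := inner_T_im hdense hsa u
  rw [@norm_add_sq ℂ, inner_smul_right]
  have h2 : RCLike.re (Complex.I * (t : ℂ) * ⟪(T u : H), (u : H)⟫) = 0 := by
    simp only [RCLike.re_to_complex, Complex.mul_re, Complex.mul_im, Complex.I_re,
      Complex.I_im, Complex.ofReal_re, Complex.ofReal_im, him]
    ring
  rw [h2, norm_smul]
  simp only [norm_mul, Complex.norm_I, one_mul, Complex.norm_real, mul_pow, Real.norm_eq_abs,
    sq_abs]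
  ring

theorem norm_u_le (hdense : Dense (T.domain : Set H)) (hsa : IsSelfAdjoint T)
    (t : ℝ) (u : T.domain) :
    |t| * ‖(u : H)‖ ≤ ‖(T u : H) + (Complex.I * t) • (u : H)‖ := by
  have h := normsq_of_sa hdense hsa t u
  have h1 : (|t| * ‖(u : H)‖) ^ 2 ≤ ‖(T u : H) + (Complex.I * t) • (u : H)‖ ^ 2 := by
    rw [h, mul_pow, _root_.sq_abs]
    nlinarith [sq_nonneg ‖(T u : H)‖]
  have h2 : (0:ℝ) ≤ |t| * ‖(u : H)‖ := by positivity
  exact (pow_le_pow_iff_left₀ h2 (norm_nonneg _) (by norm_num)).mp h1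

theorem norm_Tu_le (hdense : Dense (T.domain : Set H)) (hsa : IsSelfAdjoint T)
    (t : ℝ) (u : T.domain) :
    ‖(T u : H)‖ ≤ ‖(T u : H) + (Complex.I * t) • (u : H)‖ := by
  have h := normsq_of_sa hdense hsa t u
  have h1 : ‖(T u : H)‖ ^ 2 ≤ ‖(T u : H) + (Complex.I * t) • (u : H)‖ ^ 2 := by
    rw [h]; nlinarith [sq_nonneg (t * ‖(u : H)‖), sq_nonneg t, sq_nonneg ‖(u:H)‖,
      mul_nonneg (sq_nonneg t) (sq_nonneg ‖(u:H)‖)]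
  exact (pow_le_pow_iff_left₀ (norm_nonneg _) (norm_nonneg _) (by norm_num)).mp h1

theorem surj_of_sa (hdense : Dense (T.domain : Set H)) (hsa : IsSelfAdjoint T)
    (t : ℝ) (ht : t ≠ 0) (v : H) :
    ∃ u : T.domain, (T u : H) + (Complex.I * t) • (u : H) = v := by
  classical
  set ψ : T.domain →ₗ[ℂ] H := T.toFun + (Complex.I * t) • T.domain.subtype with hψ
  have hψa : ∀ u : T.domain, ψ u = (T u : H) + (Complex.I * t) • (u : H) := fun u => rfl
  set M : Submodule ℂ H := LinearMap.range ψ with hM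
  -- M is closed
  have hclosed : IsClosed (M : Set H) := by
    apply IsSeqClosed.isClosed
    intro g v hg hgv
    choose f hf using fun n => LinearMap.mem_range.mp (hg n)
    have hcauchy : CauchySeq g := hgv.cauchySeq
    have hkey : ∀ m n : ℕ, (T (f m - f n) : H)
        + (Complex.I * t) • ((f m - f n : T.domain) : H) = g m - g n := by
      intro m n
      rw [← hf m, ← hf n, ← map_sub ψ]
      rfl
    have hfc : CauchySeq (fun n => (f n : H)) := by
      rw [Metric.cauchySeq_iff] at hcauchy ⊢
      intro ε hε
      obtain ⟨N, hN⟩ := hcauchy (|t| * ε) (by positivity)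
      refine ⟨N, fun m hm n hn => ?_⟩
      have h1 := norm_u_le hdense hsa t (f m - f n)
      rw [hkey m n] at h1
      have h3 : ((f m - f n : T.domain) : H) = (f m : H) - (f n : H) := rfl
      rw [h3] at h1
      have h4 := hN m hm n hn
      rw [dist_eq_norm] at h4
      rw [dist_eq_norm]
      calc ‖(f m : H) - (f n : H)‖ = |t|⁻¹ * (|t| * ‖(f m : H) - (f n : H)‖) := by
            field_simp
        _ ≤ |t|⁻¹ * ‖g m - g n‖ := mul_le_mul_of_nonneg_left h1 (by positivity)
        _ < |t|⁻¹ * (|t| * ε) := mul_lt_mul_of_pos_left h4 (by positivity)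
        _ = ε := by field_simp
    have hTc : CauchySeq (fun n => (T (f n) : H)) := by
      rw [Metric.cauchySeq_iff] at hcauchy ⊢
      intro ε hε
      obtain ⟨N, hN⟩ := hcauchy ε hε
      refine ⟨N, fun m hm n hn => ?_⟩
      have h1 := norm_Tu_le hdense hsa t (f m - f n)
      rw [hkey m n] at h1
      have h3 : (T (f m - f n) : H) = (T (f m) : H) - (T (f n) : H) :=
        T.toFun.map_sub _ _
      rw [h3] at h1
      have h4 := hN m hm n hn
      rw [dist_eq_norm] at h4
      rw [dist_eq_norm]
      exact lt_of_le_of_lt h1 h4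
    obtain ⟨u, hu⟩ := cauchySeq_tendsto_of_complete hfc
    obtain ⟨w, hw⟩ := cauchySeq_tendsto_of_complete hTc
    obtain ⟨hud, hTu⟩ := closed_of_sa hdense hsa f u w hu hw
    have hlim : Tendsto g atTop (𝓝 (w + (Complex.I * t) • u)) := by
      have hgn : g = fun n => (T (f n) : H) + (Complex.I * t) • (f n : H) :=
        funext fun n => by rw [← hf n, hψa]
      rw [hgn]
      exact hw.add (hu.const_smul _)
    have hveq : v = w + (Complex.I * t) • u := tendsto_nhds_unique hgv hlim
    refine LinearMap.mem_range.mpr ⟨⟨u, hud⟩, ?_⟩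
    rw [hψa, hTu, hveq]
  -- orthogonal complement is trivial
  have horth : Mᗮ = ⊥ := by
    rw [Submodule.eq_bot_iff]
    intro z hz
    rw [Submodule.mem_orthogonal] at hz
    have hz' : ∀ u : T.domain, ⟪(Complex.I * t) • z, (u : H)⟫ = ⟪z, (T u : H)⟫ := by
      intro u
      have h0 := hz _ (LinearMap.mem_range.mpr ⟨u, rfl⟩)
      rw [hψa, inner_add_left, inner_smul_left] at h0
      have hc : ⟪(T u : H), z⟫ = Complex.I * t * ⟪(u : H), z⟫ := by
        have hconj : (starRingEnd ℂ) (Complex.I * (t:ℂ)) = -(Complex.I * t) := by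
          simp [Complex.conj_I, Complex.conj_ofReal]
        rw [hconj] at h0
        linear_combination h0
      rw [inner_smul_left, ← inner_conj_symm z (T u : H)]
      conv_rhs => rw [hc, map_mul, inner_conj_symm]
    obtain ⟨hzd, hTz⟩ := maximal_of_sa hdense hsa z ((Complex.I * t) • z) hz'
    have him := inner_T_im hdense hsa ⟨z, hzd⟩
    rw [hTz] at him
    have hval : ⟪(Complex.I * t) • z, z⟫ = ((-(t * ‖z‖ ^ 2) : ℝ) : ℂ) * Complex.I := by
      rw [inner_smul_left, inner_self_eq_norm_sq_to_K, map_mul, Complex.conj_I,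
        Complex.conj_ofReal]
      push_cast
      ring_nf
      rfl
    rw [hval] at him
    have him2 : t * ‖z‖ ^ 2 = 0 := by
      rw [Complex.mul_I_im, Complex.ofReal_re] at him
      linarith
    have hz2 : ‖z‖ ^ 2 = 0 := (mul_eq_zero.mp him2).resolve_left ht
    have : ‖z‖ = 0 := by
      have := pow_eq_zero_iff (two_ne_zero) |>.mp hz2
      exact this
    exact norm_eq_zero.mp this
  have hMtop : M = ⊤ := by
    haveI : CompleteSpace M := hclosed.completeSpace_coe
    exact Submodule.orthogonal_eq_bot_iff.mp horth
  have hv : v ∈ M := hMtop ▸ Submodule.mem_top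
  obtain ⟨u, hu⟩ := LinearMap.mem_range.mp hv
  exact ⟨u, by rw [← hψa, hu]⟩

variable (hdense : Dense (T.domain : Set H)) (hsa : IsSelfAdjoint T)
include hdense hsa

/-- the resolvent-type map: the unique `u` with `T u + (I t) u = v` -/
noncomputable def resOp (t : ℝ) (ht : t ≠ 0) (v : H) : T.domain :=
  (surj_of_sa hdense hsa t ht v).choose

theorem resOp_spec (t : ℝ) (ht : t ≠ 0) (v : H) :
    (T (resOp hdense hsa t ht v) : H)
      + (Complex.I * t) • ((resOp hdense hsa t ht v : H)) = v :=
  (surj_of_sa hdense hsa t ht v).choose_spec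

theorem res_uniq (t : ℝ) (ht : t ≠ 0) {u u' : T.domain}
    (h : (T u : H) + (Complex.I * t) • (u : H)
       = (T u' : H) + (Complex.I * t) • (u' : H)) : u = u' := by
  have h1 := norm_u_le hdense hsa t (u - u')
  have h2 : (T (u - u') : H) + (Complex.I * t) • ((u - u' : T.domain) : H) = 0 := by
    have hT : (T (u - u') : H) = (T u : H) - (T u' : H) := T.toFun.map_sub _ _
    have hc : ((u - u' : T.domain) : H) = (u : H) - (u' : H) := rfl
    have h3 : (T u : H) - (T u' : H) + ((Complex.I * t) • (u:H) - (Complex.I * t) • (u':H))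
        = ((T u : H) + (Complex.I * t) • (u:H)) - ((T u' : H) + (Complex.I * t) • (u':H)) := by
      abel
    rw [hT, hc, smul_sub, h3, h, sub_self]
  rw [h2, norm_zero] at h1
  have : ‖((u - u' : T.domain) : H)‖ = 0 := by
    have ht' : 0 < |t| := abs_pos.mpr ht
    nlinarith [norm_nonneg ((u - u' : T.domain) : H)]
  have : ((u - u' : T.domain) : H) = 0 := norm_eq_zero.mp this
  have : u - u' = 0 := by exact_mod_cast this
  exact sub_eq_zero.mp this

theorem resOp_eq (t : ℝ) (ht : t ≠ 0) (v : H) (u : T.domain)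
    (h : (T u : H) + (Complex.I * t) • (u : H) = v) :
    resOp hdense hsa t ht v = u :=
  res_uniq hdense hsa t ht (by rw [resOp_spec, h])

theorem resOp_add (t : ℝ) (ht : t ≠ 0) (v w : H) :
    resOp hdense hsa t ht (v + w)
      = resOp hdense hsa t ht v + resOp hdense hsa t ht w := by
  apply resOp_eq
  have h1 := resOp_spec hdense hsa t ht v
  have h2 := resOp_spec hdense hsa t ht w
  have hT : (T (resOp hdense hsa t ht v + resOp hdense hsa t ht w) : H)
      = (T (resOp hdense hsa t ht v) : H) + (T (resOp hdense hsa t ht w) : H) :=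
    T.toFun.map_add _ _
  have hc : ((resOp hdense hsa t ht v + resOp hdense hsa t ht w : T.domain) : H)
      = (resOp hdense hsa t ht v : H) + (resOp hdense hsa t ht w : H) := rfl
  rw [hT, hc, smul_add]
  have h3 : (T (resOp hdense hsa t ht v) : H) + (T (resOp hdense hsa t ht w) : H)
      + ((Complex.I * t) • (resOp hdense hsa t ht v : H)
        + (Complex.I * t) • (resOp hdense hsa t ht w : H))
      = ((T (resOp hdense hsa t ht v) : H) + (Complex.I * t) • (resOp hdense hsa t ht v : H))
        + ((T (resOp hdense hsa t ht w) : H)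
          + (Complex.I * t) • (resOp hdense hsa t ht w : H)) := by abel
  rw [h3, h1, h2]

theorem norm_resOp_le (t : ℝ) (ht : t ≠ 0) (v : H) :
    |t| * ‖(resOp hdense hsa t ht v : H)‖ ≤ ‖v‖ := by
  have := norm_u_le hdense hsa t (resOp hdense hsa t ht v)
  rwa [resOp_spec] at this

theorem norm_TresOp_le (t : ℝ) (ht : t ≠ 0) (v : H) :
    ‖(T (resOp hdense hsa t ht v) : H)‖ ≤ ‖v‖ := by
  have := norm_Tu_le hdense hsa t (resOp hdense hsa t ht v)
  rwa [resOp_spec] at this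

theorem norm_TresOp_le_of_dom (t : ℝ) (ht : t ≠ 0) (w : T.domain) :
    ‖(T (resOp hdense hsa t ht (w : H)) : H)‖ ≤ ‖(T w : H)‖ / |t| := by
  set p := resOp hdense hsa t ht (w : H) with hp
  have hspec := resOp_spec hdense hsa t ht (w : H)
  have hmem : (T p : H) ∈ T.domain := by
    have : (T p : H) = (w : H) - (Complex.I * t) • (p : H) := by
      rw [← hspec]; abel
    rw [this]
    exact sub_mem w.2 (Submodule.smul_mem _ _ p.2)
  set d : T.domain := ⟨(T p : H), hmem⟩ with hd
  have hde : resOp hdense hsa t ht (T w : H) = d := by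
    apply resOp_eq
    have hcoed : (d : H) = (w : H) - (Complex.I * t) • (p : H) := by
      simp only [hd]; rw [← hspec]; abel
    have hTd : (T d : H) = (T w : H) - (Complex.I * t) • (T p : H) := by
      have : d = w - (Complex.I * t) • p := by
        apply Subtype.ext
        rw [hcoed]; rfl
      have e1 : (T (w - (Complex.I * (t:ℂ)) • p) : H)
          = (T w : H) - (T ((Complex.I * (t:ℂ)) • p) : H) := T.toFun.map_sub _ _
      have e2 : (T ((Complex.I * (t:ℂ)) • p) : H) = (Complex.I * t) • (T p : H) :=
        T.toFun.map_smul _ _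
      rw [this, e1, e2]
    rw [hTd]
    simp only [hd]
    abel
  have := norm_resOp_le hdense hsa t ht (T w : H)
  rw [hde] at this
  have hcd : ‖(d : H)‖ = ‖(T p : H)‖ := rfl
  rw [hcd] at this
  rw [le_div_iff₀ (abs_pos.mpr ht)]
  linarith

theorem tendsto_TresOp (s : ℕ → ℝ) (hs0 : ∀ n, s n ≠ 0)
    (hs : Filter.Tendsto (fun n => |s n|) atTop atTop) (v : H) :
    Filter.Tendsto (fun n => ‖(T (resOp hdense hsa (s n) (hs0 n) v) : H)‖)
      atTop (𝓝 0) := by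
  rw [Metric.tendsto_atTop]
  intro ε hε
  obtain ⟨w, hw⟩ : ∃ w : T.domain, ‖v - (w : H)‖ < ε / 2 := by
    have := Metric.dense_iff.mp hdense v (ε/2) (by positivity)
    obtain ⟨w, hw1, hw2⟩ := this
    exact ⟨⟨w, hw2⟩, by rw [← dist_eq_norm]; exact Metric.mem_ball'.mp hw1⟩
  have hdiv : Filter.Tendsto (fun n => ‖(T w : H)‖ / |s n|) atTop (𝓝 0) :=
    Filter.Tendsto.div_atTop tendsto_const_nhds hs
  have hev : ∀ᶠ n in atTop, ‖(T w : H)‖ / |s n| < ε / 2 := by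
    have := hdiv.eventually (eventually_lt_nhds (by positivity : (0:ℝ) < ε/2))
    exact this
  obtain ⟨N, hN⟩ := eventually_atTop.mp hev
  refine ⟨N, fun n hn => ?_⟩
  have hsplit : resOp hdense hsa (s n) (hs0 n) v
      = resOp hdense hsa (s n) (hs0 n) (v - (w : H))
        + resOp hdense hsa (s n) (hs0 n) (w : H) := by
    rw [← resOp_add]
    congr 1
    abel
  have hb1 := norm_TresOp_le hdense hsa (s n) (hs0 n) (v - (w : H))
  have hb2 := norm_TresOp_le_of_dom hdense hsa (s n) (hs0 n) w
  have hT : (T (resOp hdense hsa (s n) (hs0 n) v) : H)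
      = (T (resOp hdense hsa (s n) (hs0 n) (v - (w : H))) : H)
        + (T (resOp hdense hsa (s n) (hs0 n) (w : H)) : H) := by
    rw [hsplit]; exact T.toFun.map_add _ _
  rw [Real.dist_eq, sub_zero, _root_.abs_of_nonneg (norm_nonneg _), hT]
  calc ‖_ + _‖ ≤ _ := norm_add_le _ _
    _ < ε/2 + ε/2 := by
        apply add_lt_add_of_le_of_lt (le_trans hb1 (le_of_lt hw))
        exact lt_of_le_of_lt hb2 (hN n hn)
    _ = ε := by ring

theorem cancel_of_sa (t : ℝ) (ht : t ≠ 0) (ht' : (-t) ≠ 0) (u v : H) :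
    ⟪(T ((Complex.I * t) • resOp hdense hsa t ht u) : H), v⟫
      = ⟪u, (T ((-(Complex.I * (t:ℂ))) • resOp hdense hsa (-t) ht' v) : H)⟫ := by
  set p := resOp hdense hsa t ht u with hp
  set q := resOp hdense hsa (-t) ht' v with hq
  have hu := resOp_spec hdense hsa t ht u
  have hv := resOp_spec hdense hsa (-t) ht' v
  have hsym := symm_of_sa hdense hsa p q
  have hconj : (starRingEnd ℂ) (Complex.I * (t:ℂ)) = -(Complex.I * t) := by
    simp [Complex.conj_I, Complex.conj_ofReal]
  have hTs1 : (T ((Complex.I * (t:ℂ)) • p) : H) = (Complex.I * t) • (T p : H) :=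
    T.toFun.map_smul _ _
  have hTs2 : (T ((-(Complex.I * (t:ℂ))) • q) : H) = (-(Complex.I * t)) • (T q : H) :=
    T.toFun.map_smul _ _
  have key : ⟪(T p : H), v⟫ = ⟪u, (T q : H)⟫ := by
    rw [← hv, ← hu]
    rw [inner_add_right, inner_add_left, inner_smul_right, inner_smul_left, hsym, hconj]
    push_cast
    ring
  rw [hTs1, hTs2, inner_smul_left, inner_smul_right, key, hconj]

omit hdense hsa

theorem Lsem_eq_iSup (x : H →L[ℂ] H) :
    Lsem T x = ⨆ (ξ : T.domain) (_ : ‖(ξ : H)‖ = 1) (η : T.domain) (_ : ‖(η : H)‖ = 1),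
      (‖Bform T x ξ η‖₊ : ℝ≥0∞) := rfl

theorem Lsem_le_of_forall {x : H →L[ℂ] H} {C : ℝ≥0∞}
    (h : ∀ ξ η : T.domain, ‖(ξ : H)‖ = 1 → ‖(η : H)‖ = 1 → (‖Bform T x ξ η‖₊ : ℝ≥0∞) ≤ C) :
    Lsem T x ≤ C := by
  rw [Lsem_eq_iSup]
  exact iSup_le fun ξ => iSup_le fun hξ => iSup_le fun η => iSup_le fun hη => h ξ η hξ hη

theorem le_Lsem {x : H →L[ℂ] H} {ξ η : T.domain} (hξ : ‖(ξ : H)‖ = 1) (hη : ‖(η : H)‖ = 1) :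
    (‖Bform T x ξ η‖₊ : ℝ≥0∞) ≤ Lsem T x := by
  rw [Lsem_eq_iSup]
  exact le_iSup_of_le ξ (le_iSup_of_le hξ (le_iSup_of_le η (le_iSup_of_le hη le_rfl)))

theorem Bform_smul_smul (x : H →L[ℂ] H) (c d : ℂ) (ξ η : T.domain) :
    Bform T x (c • ξ) (d • η) = (starRingEnd ℂ) c * d * Bform T x ξ η := by
  simp only [Bform, LinearPMap.map_smul, Submodule.coe_smul, map_smul, inner_smul_left,
    inner_smul_right]
  ring

theorem Bform_zero_left (x : H →L[ℂ] H) (η : T.domain) : Bform T x 0 η = 0 := by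
  have hT0 : T (0 : T.domain) = 0 := T.toFun.map_zero
  simp [Bform, hT0]

theorem Bform_zero_right (x : H →L[ℂ] H) (ξ : T.domain) : Bform T x ξ 0 = 0 := by
  have hT0 : T (0 : T.domain) = 0 := T.toFun.map_zero
  simp [Bform, hT0]

theorem nnnorm_Bform_le (x : H →L[ℂ] H) (ξ η : T.domain) :
    (‖Bform T x ξ η‖₊ : ℝ≥0∞) ≤ Lsem T x * ‖(ξ : H)‖₊ * ‖(η : H)‖₊ := by
  by_cases hξ : (ξ : H) = 0
  · have h0 : ξ = 0 := Subtype.ext hξ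
    rw [h0, Bform_zero_left]
    simp
  by_cases hη : (η : H) = 0
  · have h0 : η = 0 := Subtype.ext hη
    rw [h0, Bform_zero_right]
    simp
  · have ha : (0:ℝ) < ‖(ξ : H)‖ := norm_pos_iff.mpr hξ
    have hb : (0:ℝ) < ‖(η : H)‖ := norm_pos_iff.mpr hη
    set ξ' : T.domain := ((‖(ξ : H)‖⁻¹ : ℝ) : ℂ) • ξ with hξ'
    set η' : T.domain := ((‖(η : H)‖⁻¹ : ℝ) : ℂ) • η with hη'
    have hξ'n : ‖(ξ' : H)‖ = 1 := by
      rw [hξ', Submodule.coe_smul, norm_smul, Complex.norm_real, Real.norm_eq_abs,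
        abs_of_pos (inv_pos.mpr ha)]
      exact inv_mul_cancel₀ ha.ne'
    have hη'n : ‖(η' : H)‖ = 1 := by
      rw [hη', Submodule.coe_smul, norm_smul, Complex.norm_real, Real.norm_eq_abs,
        abs_of_pos (inv_pos.mpr hb)]
      exact inv_mul_cancel₀ hb.ne'
    have h1 : ξ = ((‖(ξ : H)‖ : ℝ) : ℂ) • ξ' := by
      rw [hξ', smul_smul, ← Complex.ofReal_mul, mul_inv_cancel₀ ha.ne', Complex.ofReal_one,
        one_smul]
    have h2 : η = ((‖(η : H)‖ : ℝ) : ℂ) • η' := by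
      rw [hη', smul_smul, ← Complex.ofReal_mul, mul_inv_cancel₀ hb.ne', Complex.ofReal_one,
        one_smul]
    have hrel : Bform T x ξ η
        = ((‖(ξ : H)‖ : ℂ)) * ((‖(η : H)‖ : ℂ)) * Bform T x ξ' η' := by
      conv_lhs => rw [h1, h2]
      rw [Bform_smul_smul, Complex.conj_ofReal]
    have hnn : ‖Bform T x ξ η‖₊ = ‖(ξ : H)‖₊ * ‖(η : H)‖₊ * ‖Bform T x ξ' η'‖₊ := by
      rw [hrel, nnnorm_mul, nnnorm_mul]
      congr 1
      congr 1
      · rw [Complex.nnnorm_real, nnnorm_norm]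
      · rw [Complex.nnnorm_real, nnnorm_norm]
    rw [hnn]
    push_cast
    calc (‖(ξ : H)‖₊ : ℝ≥0∞) * ‖(η : H)‖₊ * ‖Bform T x ξ' η'‖₊
        ≤ (‖(ξ : H)‖₊ : ℝ≥0∞) * ‖(η : H)‖₊ * Lsem T x :=
          mul_le_mul' le_rfl (le_Lsem hξ'n hη'n)
      _ = Lsem T x * ‖(ξ : H)‖₊ * ‖(η : H)‖₊ := by ring

theorem norm_Bform_le (x : H →L[ℂ] H) (hx : Lsem T x ≠ ⊤) (ξ η : T.domain) :
    ‖Bform T x ξ η‖ ≤ (Lsem T x).toReal * ‖(ξ : H)‖ * ‖(η : H)‖ := by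
  have h := nnnorm_Bform_le (T := T) x ξ η
  have hfin : Lsem T x * ‖(ξ : H)‖₊ * ‖(η : H)‖₊ ≠ ⊤ :=
    ENNReal.mul_ne_top (ENNReal.mul_ne_top hx ENNReal.coe_ne_top) ENNReal.coe_ne_top
  have := ENNReal.toReal_mono hfin h
  rwa [ENNReal.toReal_mul, ENNReal.toReal_mul, ENNReal.coe_toReal, ENNReal.coe_toReal,
    ENNReal.coe_toReal, coe_nnnorm, coe_nnnorm, coe_nnnorm] at this

theorem Lsem_zero : Lsem T (0 : H →L[ℂ] H) = 0 := by
  refine le_antisymm (Lsem_le_of_forall fun ξ η hξ hη => ?_) zero_le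
  have : Bform T (0 : H →L[ℂ] H) ξ η = 0 := by simp [Bform]
  simp [this]

theorem Bform_add (x y : H →L[ℂ] H) (ξ η : T.domain) :
    Bform T (x + y) ξ η = Bform T x ξ η + Bform T y ξ η := by
  simp only [Bform, star_add, ContinuousLinearMap.add_apply, inner_add_left, inner_add_right]
  ring

theorem Lsem_add_le (x y : H →L[ℂ] H) : Lsem T (x + y) ≤ Lsem T x + Lsem T y := by
  refine Lsem_le_of_forall fun ξ η hξ hη => ?_
  calc (‖Bform T (x + y) ξ η‖₊ : ℝ≥0∞)
      = (‖Bform T x ξ η + Bform T y ξ η‖₊ : ℝ≥0∞) := by rw [Bform_add]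
    _ ≤ (‖Bform T x ξ η‖₊ : ℝ≥0∞) + ‖Bform T y ξ η‖₊ := by
        exact_mod_cast nnnorm_add_le _ _
    _ ≤ Lsem T x + Lsem T y := add_le_add (le_Lsem hξ hη) (le_Lsem hξ hη)

theorem Bform_csmul (c : ℂ) (x : H →L[ℂ] H) (ξ η : T.domain) :
    Bform T (c • x) ξ η = (starRingEnd ℂ) c * Bform T x ξ η := by
  simp only [Bform, star_smul, ContinuousLinearMap.smul_apply, inner_smul_left,
    inner_smul_right, RingHom.id_apply, starRingEnd_apply]
  simp only [← starRingEnd_apply]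
  ring

theorem Lsem_smul (c : ℂ) (x : H →L[ℂ] H) : Lsem T (c • x) = (‖c‖₊ : ℝ≥0∞) * Lsem T x := by
  rw [Lsem_eq_iSup, Lsem_eq_iSup]
  have hpt : ∀ ξ η : T.domain, (‖Bform T (c • x) ξ η‖₊ : ℝ≥0∞)
      = (‖c‖₊ : ℝ≥0∞) * ‖Bform T x ξ η‖₊ := by
    intro ξ η
    rw [Bform_csmul, nnnorm_mul, RCLike.nnnorm_conj]
    push_cast
    ring
  simp only [ENNReal.mul_iSup]
  exact iSup_congr fun ξ => iSup_congr fun hξ => iSup_congr fun η => iSup_congr fun hη =>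
    hpt ξ η

theorem Bform_star (x : H →L[ℂ] H) (ξ η : T.domain) :
    ‖Bform T (star x) ξ η‖₊ = ‖Bform T x η ξ‖₊ := by
  have hc : (starRingEnd ℂ) (Bform T x η ξ) = - Bform T (star x) ξ η := by
    simp only [Bform, star_star, map_sub, inner_conj_symm]
    ring
  have : ‖(starRingEnd ℂ) (Bform T x η ξ)‖₊ = ‖Bform T x η ξ‖₊ := RCLike.nnnorm_conj _
  rw [hc, nnnorm_neg] at this
  exact this

theorem Lsem_star (x : H →L[ℂ] H) : Lsem T (star x) = Lsem T x := by
  have key : ∀ y : H →L[ℂ] H, Lsem T (star y) ≤ Lsem T y := by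
    intro y
    refine Lsem_le_of_forall fun ξ η hξ hη => ?_
    rw [Bform_star]
    exact le_Lsem hη hξ
  refine le_antisymm (key x) ?_
  have := key (star x)
  rwa [star_star] at this

theorem Lsem_lsc : LowerSemicontinuous (Lsem T) := by
  have : (Lsem T) = fun x => ⨆ (ξ : T.domain) (_ : ‖(ξ : H)‖ = 1) (η : T.domain)
      (_ : ‖(η : H)‖ = 1), (‖Bform T x ξ η‖₊ : ℝ≥0∞) := rfl
  rw [this]
  apply lowerSemicontinuous_iSup
  intro ξ
  apply lowerSemicontinuous_iSup
  intro hξ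
  apply lowerSemicontinuous_iSup
  intro η
  apply lowerSemicontinuous_iSup
  intro hη
  apply Continuous.lowerSemicontinuous
  apply ENNReal.continuous_coe.comp
  apply Continuous.nnnorm
  have h1 : Continuous fun x : H →L[ℂ] H => (star x) (T η : H) := by
    exact (ContinuousLinearMap.apply ℂ H ((T η : H))).continuous.comp continuous_star
  have h2 : Continuous fun x : H →L[ℂ] H => x (T ξ : H) :=
    (ContinuousLinearMap.apply ℂ H ((T ξ : H))).continuous
  exact ((continuous_const.inner h1).sub (h2.inner continuous_const))

theorem norm_Bform_mul_le (hdense : Dense (T.domain : Set H)) (hsa : IsSelfAdjoint T)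
    (x y : H →L[ℂ] H) (hx : Lsem T x ≠ ⊤) (hy : Lsem T y ≠ ⊤)
    (ξ η : T.domain) (hξ : ‖(ξ : H)‖ = 1) (hη : ‖(η : H)‖ = 1) :
    ‖Bform T (x * y) ξ η‖ ≤ (Lsem T x).toReal * ‖y‖ + ‖x‖ * (Lsem T y).toReal := by
  set u : H := y (ξ : H) with hu
  set v : H := (star x) (η : H) with hv
  have hs0 : ∀ n : ℕ, ((n : ℝ) + 1) ≠ 0 := fun n => by positivity
  have hs0' : ∀ n : ℕ, (-((n : ℝ) + 1)) ≠ 0 := fun n => neg_ne_zero.mpr (hs0 n)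
  set p : ℕ → T.domain := fun n => resOp hdense hsa ((n : ℝ) + 1) (hs0 n) u with hp
  set q : ℕ → T.domain := fun n => resOp hdense hsa (-((n : ℝ) + 1)) (hs0' n) v with hq
  set a : ℕ → T.domain :=
    fun n => (Complex.I * (((n : ℝ) + 1 : ℝ) : ℂ)) • p n with hadef
  set b : ℕ → T.domain :=
    fun n => (-(Complex.I * (((n : ℝ) + 1 : ℝ) : ℂ))) • q n with hbdef
  have hxad : ∀ w : H, ⟪x w, (η : H)⟫ = ⟪w, v⟫ := by
    intro w
    rw [hv, ContinuousLinearMap.star_eq_adjoint]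
    exact (ContinuousLinearMap.adjoint_inner_right x w (η : H)).symm
  have hyad : ∀ w : H, ⟪(ξ : H), (star y) w⟫ = ⟪u, w⟫ := by
    intro w
    rw [hu, ContinuousLinearMap.star_eq_adjoint]
    exact ContinuousLinearMap.adjoint_inner_right y (ξ : H) w
  have hcanc : ∀ n, ⟪(T (a n) : H), v⟫ = ⟪u, (T (b n) : H)⟫ := fun n =>
    cancel_of_sa hdense hsa ((n : ℝ) + 1) (hs0 n) (hs0' n) u v
  have hE : ∀ n, Bform T x (a n) η + Bform T y ξ (b n)
      = ⟪((a n : H)), (star x) ((T η : H))⟫ - ⟪y ((T ξ : H)), ((b n : H))⟫ := by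
    intro n
    simp only [Bform]
    rw [hxad ((T (a n) : H)), hyad ((T (b n) : H)), hcanc n]
    ring
  have hBxy : Bform T (x * y) ξ η
      = ⟪u, (star x) ((T η : H))⟫ - ⟪y ((T ξ : H)), v⟫ := by
    simp only [Bform, star_mul, ContinuousLinearMap.mul_apply]
    rw [hyad ((star x) ((T η : H))), hxad (y ((T ξ : H)))]
  -- convergence
  have hacoe : ∀ n, (a n : H) = u - (T (p n) : H) := by
    intro n
    have hspec := resOp_spec hdense hsa ((n : ℝ) + 1) (hs0 n) u
    rw [hadef]
    simp only [Submodule.coe_smul]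
    rw [← hspec]
    push_cast
    abel
  have hbcoe : ∀ n, (b n : H) = v - (T (q n) : H) := by
    intro n
    have hspec := resOp_spec hdense hsa (-((n : ℝ) + 1)) (hs0' n) v
    have hcast : ((-((n : ℝ) + 1) : ℝ) : ℂ) = -((((n : ℝ) + 1) : ℝ) : ℂ) := by push_cast; ring
    rw [hcast, mul_neg, neg_smul] at hspec
    rw [hbdef]
    simp only [Submodule.coe_smul]
    rw [← hspec, neg_smul]
    abel
  have habs : Filter.Tendsto (fun n : ℕ => |(n : ℝ) + 1|) atTop atTop := by
    have h1 : Filter.Tendsto (fun n : ℕ => (n : ℝ) + 1) atTop atTop :=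
      Filter.tendsto_atTop_add_const_right _ 1 tendsto_natCast_atTop_atTop
    refine h1.congr' ?_
    filter_upwards with n
    rw [abs_of_pos (by positivity)]
  have habs' : Filter.Tendsto (fun n : ℕ => |(-((n : ℝ) + 1))|) atTop atTop := by
    refine habs.congr' ?_
    filter_upwards with n
    rw [abs_neg]
  have hTp0 : Filter.Tendsto (fun n => (T (p n) : H)) atTop (𝓝 0) := by
    rw [tendsto_zero_iff_norm_tendsto_zero]
    exact tendsto_TresOp hdense hsa _ hs0 habs u
  have hTq0 : Filter.Tendsto (fun n => (T (q n) : H)) atTop (𝓝 0) := by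
    rw [tendsto_zero_iff_norm_tendsto_zero]
    exact tendsto_TresOp hdense hsa _ hs0' habs' v
  have ha : Filter.Tendsto (fun n => (a n : H)) atTop (𝓝 u) := by
    have := tendsto_const_nhds (x := u) (f := atTop (α := ℕ)) |>.sub hTp0
    rw [sub_zero] at this
    exact this.congr fun n => (hacoe n).symm
  have hb : Filter.Tendsto (fun n => (b n : H)) atTop (𝓝 v) := by
    have := tendsto_const_nhds (x := v) (f := atTop (α := ℕ)) |>.sub hTq0
    rw [sub_zero] at this
    exact this.congr fun n => (hbcoe n).symm
  have hlim : Filter.Tendsto (fun n => Bform T x (a n) η + Bform T y ξ (b n)) atTop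
      (𝓝 (Bform T (x * y) ξ η)) := by
    rw [hBxy]
    have : Filter.Tendsto
        (fun n => ⟪((a n : H)), (star x) ((T η : H))⟫ - ⟪y ((T ξ : H)), ((b n : H))⟫) atTop
        (𝓝 (⟪u, (star x) ((T η : H))⟫ - ⟪y ((T ξ : H)), v⟫)) :=
      (ha.inner tendsto_const_nhds).sub (tendsto_const_nhds.inner hb)
    exact this.congr fun n => (hE n).symm
  -- bound
  have hbound : ∀ n, ‖Bform T x (a n) η + Bform T y ξ (b n)‖
      ≤ (Lsem T x).toReal * ‖y‖ + ‖x‖ * (Lsem T y).toReal := by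
    intro n
    have hna : ‖(a n : H)‖ ≤ ‖y‖ := by
      have h1 : ‖(a n : H)‖ = ((n : ℝ) + 1) * ‖(p n : H)‖ := by
        rw [hadef]
        simp only [Submodule.coe_smul]
        rw [norm_smul, norm_mul, Complex.norm_I, one_mul, Complex.norm_real,
          Real.norm_eq_abs, abs_of_pos (by positivity)]
      have h2 := norm_resOp_le hdense hsa ((n : ℝ) + 1) (hs0 n) u
      rw [abs_of_pos (by positivity)] at h2
      have h3 : ‖u‖ ≤ ‖y‖ := by
        rw [hu]
        calc ‖y (ξ : H)‖ ≤ ‖y‖ * ‖(ξ : H)‖ := y.le_opNorm _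
          _ = ‖y‖ := by rw [hξ, mul_one]
      rw [h1]
      exact le_trans h2 h3
    have hnb : ‖(b n : H)‖ ≤ ‖x‖ := by
      have h1 : ‖(b n : H)‖ = ((n : ℝ) + 1) * ‖(q n : H)‖ := by
        rw [hbdef]
        simp only [Submodule.coe_smul]
        rw [norm_smul, norm_neg, norm_mul, Complex.norm_I, one_mul, Complex.norm_real,
          Real.norm_eq_abs, abs_of_pos (by positivity)]
      have h2 := norm_resOp_le hdense hsa (-((n : ℝ) + 1)) (hs0' n) v
      rw [abs_neg, abs_of_pos (by positivity)] at h2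
      have h3 : ‖v‖ ≤ ‖x‖ := by
        rw [hv]
        calc ‖(star x) (η : H)‖ ≤ ‖star x‖ * ‖(η : H)‖ := (star x).le_opNorm _
          _ = ‖x‖ := by rw [hη, mul_one, norm_star]
      rw [h1]
      exact le_trans h2 h3
    calc ‖Bform T x (a n) η + Bform T y ξ (b n)‖
        ≤ ‖Bform T x (a n) η‖ + ‖Bform T y ξ (b n)‖ := norm_add_le _ _
      _ ≤ (Lsem T x).toReal * ‖(a n : H)‖ * ‖(η : H)‖
          + (Lsem T y).toReal * ‖(ξ : H)‖ * ‖(b n : H)‖ := by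
          exact add_le_add (norm_Bform_le x hx (a n) η) (norm_Bform_le y hy ξ (b n))
      _ ≤ (Lsem T x).toReal * ‖y‖ + ‖x‖ * (Lsem T y).toReal := by
          rw [hη, hξ, mul_one, mul_one]
          have c1 : (Lsem T x).toReal * ‖(a n : H)‖ ≤ (Lsem T x).toReal * ‖y‖ :=
            mul_le_mul_of_nonneg_left hna ENNReal.toReal_nonneg
          have c2 : (Lsem T y).toReal * ‖(b n : H)‖ ≤ (Lsem T y).toReal * ‖x‖ :=
            mul_le_mul_of_nonneg_left hnb ENNReal.toReal_nonneg
          calc (Lsem T x).toReal * ‖(a n : H)‖ + (Lsem T y).toReal * ‖(b n : H)‖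
              ≤ (Lsem T x).toReal * ‖y‖ + (Lsem T y).toReal * ‖x‖ := add_le_add c1 c2
            _ = (Lsem T x).toReal * ‖y‖ + ‖x‖ * (Lsem T y).toReal := by ring
  exact le_of_tendsto hlim.norm (Filter.Eventually.of_forall hbound)

theorem Lsem_mul_le (hdense : Dense (T.domain : Set H)) (hsa : IsSelfAdjoint T)
    (x y : H →L[ℂ] H) :
    Lsem T (x * y) ≤ Lsem T x * (‖y‖₊ : ℝ≥0∞) + (‖x‖₊ : ℝ≥0∞) * Lsem T y := by
  by_cases hx : Lsem T x = ⊤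
  · by_cases hy0 : y = 0
    · rw [hy0, mul_zero, Lsem_zero]
      exact zero_le
    · have hne : (‖y‖₊ : ℝ≥0∞) ≠ 0 := by
        simpa using hy0
      rw [hx, ENNReal.top_mul hne]
      exact le_top
  by_cases hy : Lsem T y = ⊤
  · by_cases hx0 : x = 0
    · rw [hx0, zero_mul, Lsem_zero]
      exact zero_le
    · have hne : (‖x‖₊ : ℝ≥0∞) ≠ 0 := by
        simpa using hx0
      rw [hy, ENNReal.mul_top hne]
      simp
  refine Lsem_le_of_forall fun ξ η hξ hη => ?_
  have hreal := norm_Bform_mul_le hdense hsa x y hx hy ξ η hξ hη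
  calc (‖Bform T (x * y) ξ η‖₊ : ℝ≥0∞)
      = ENNReal.ofReal ‖Bform T (x * y) ξ η‖ := (ofReal_norm _).symm
    _ ≤ ENNReal.ofReal ((Lsem T x).toReal * ‖y‖ + ‖x‖ * (Lsem T y).toReal) :=
        ENNReal.ofReal_le_ofReal hreal
    _ ≤ Lsem T x * (‖y‖₊ : ℝ≥0∞) + (‖x‖₊ : ℝ≥0∞) * Lsem T y := by
        rw [ENNReal.ofReal_add (by positivity) (by positivity),
          ENNReal.ofReal_mul ENNReal.toReal_nonneg,
          ENNReal.ofReal_mul (norm_nonneg _),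
          ENNReal.ofReal_toReal hx, ENNReal.ofReal_toReal hy,
          ofReal_norm, ofReal_norm, enorm_eq_nnnorm, enorm_eq_nnnorm]
end aux

/-- For a densely defined self-adjoint operator `T` on a complex Hilbert space,
the map `L = Lsem T` is (1) lower semicontinuous for the operator norm, (2) `*`-invariant,
(3) Leibniz: `L(xy) ≤ L(x)‖y‖ + ‖x‖L(y)`; and it is subadditive and absolutely homogeneous,
hence a seminorm on `{x : L(x) < ∞}`. -/
theorem stmt1 {H : Type*} [NormedAddCommGroup H] [InnerProductSpace ℂ H] [CompleteSpace H]
    (T : H →ₗ.[ℂ] H) (hdense : Dense (T.domain : Set H)) (hsa : IsSelfAdjoint T) :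
    LowerSemicontinuous (Lsem T) ∧
    (∀ x : H →L[ℂ] H, Lsem T (star x) = Lsem T x) ∧
    (∀ x y : H →L[ℂ] H,
      Lsem T (x * y) ≤ Lsem T x * (‖y‖₊ : ℝ≥0∞) + (‖x‖₊ : ℝ≥0∞) * Lsem T y) ∧
    (∀ x y : H →L[ℂ] H, Lsem T (x + y) ≤ Lsem T x + Lsem T y) ∧
    (∀ (c : ℂ) (x : H →L[ℂ] H), Lsem T (c • x) = (‖c‖₊ : ℝ≥0∞) * Lsem T x) := by
  exact ⟨Lsem_lsc, Lsem_star, Lsem_mul_le hdense hsa, Lsem_add_le, Lsem_smul⟩
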